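/- For any subsets Σ, Σ', Σ'' ⊆ S, the multiplication of W restricts to a map N(Σ', Σ'') × N(Σ, Σ') → N(Σ, Σ''); that is, if y ∈ N(Σ, Σ') and y' ∈ N(Σ', Σ''), then y' y ∈ N(Σ, Σ''). -/

import Mathlib

/-!
Relative Coxeter groups: common definitions.

`(W, S)` is a Coxeter system (Mathlib's `CoxeterSystem M W`), `ℓ = cs.length`.
For `w : W`, `invSet cs w` is the set `T(w)` of left inversions of `w`, and
`descSet cs w = T(w) ∩ S` is `D(w)`.  For a subset `Sg ⊆ S` (playing the role of `Σ`),
`par Sg` is the standard parabolic subgroup `W_Σ`, `parRefl Sg` its set of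
reflections `T_Σ`, `minRight cs Sg = W^Σ`, `minLeft cs Sg = ^ΣW`,
`relN cs Sg Sg' = N(Σ, Σ')`, `IsLongest cs Sg w` says `w` is a longest element of `W_Σ`,
`longest cs Sg` is the longest element `w₀^Σ`, `relW cs Sg = W̃`,
`complSet cs Sg = Σ^∁`, `tilde cs Sg s = s̃ = w₀^{Σ∪{s}} w₀^Σ`, `relS cs Sg = S̃`,
`relLength cs Sg = ℓ̃ : W → ℕ∞`, and `GoodSubset cs Sg` records the standing
hypotheses (1) and (2) on `Σ`.
-/

namespace RelativeCoxeter

open CoxeterSystem List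

variable {B W : Type*} [Group W] {M : CoxeterMatrix B}

/-- The set `S` of simple reflections of the Coxeter system. -/
def simpleSet (cs : CoxeterSystem M W) : Set W := Set.range cs.simple

/-- `T(w)`: the set of left inversions of `w`, i.e. reflections `t` with `ℓ(tw) < ℓ(w)`. -/
def invSet (cs : CoxeterSystem M W) (w : W) : Set W :=
  {t | cs.IsReflection t ∧ cs.length (t * w) < cs.length w}

/-- `D(w) = T(w) ∩ S`. -/
def descSet (cs : CoxeterSystem M W) (w : W) : Set W :=
  invSet cs w ∩ simpleSet cs

/-- The standard parabolic subgroup `W_Σ` generated by `Σ`. -/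
def par (Sg : Set W) : Subgroup W := Subgroup.closure Sg

/-- `T_Σ`: the set of reflections of the Coxeter system `(W_Σ, Σ)`. -/
def parRefl (Sg : Set W) : Set W :=
  {t | ∃ u ∈ par Sg, ∃ s ∈ Sg, t = u * s * u⁻¹}

/-- `W^Σ = {w : T(w⁻¹) ∩ T_Σ = ∅}`, minimal-length representatives of `W/W_Σ`. -/
def minRight (cs : CoxeterSystem M W) (Sg : Set W) : Set W :=
  {w | invSet cs w⁻¹ ∩ parRefl Sg = ∅}

/-- `^ΣW = {w : T(w) ∩ T_Σ = ∅}`, minimal-length representatives of `W_Σ\W`. -/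
def minLeft (cs : CoxeterSystem M W) (Sg : Set W) : Set W :=
  {w | invSet cs w ∩ parRefl Sg = ∅}

/-- `N(Σ, Σ') = {y ∈ W^Σ ∩ ^{Σ'}W : y W_Σ y⁻¹ = W_{Σ'}}`. -/
def relN (cs : CoxeterSystem M W) (Sg Sg' : Set W) : Set W :=
  {y | y ∈ minRight cs Sg ∧ y ∈ minLeft cs Sg' ∧
    (fun u => y * u * y⁻¹) '' (par Sg : Set W) = (par Sg' : Set W)}

/-- `w` is a longest element of `W_Σ`. -/
def IsLongest (cs : CoxeterSystem M W) (Sg : Set W) (w : W) : Prop :=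
  w ∈ par Sg ∧ ∀ u ∈ par Sg, cs.length u ≤ cs.length w

/-- The longest element `w₀^Σ` of `W_Σ` (defined when it exists; junk value `1` otherwise). -/
noncomputable def longest (cs : CoxeterSystem M W) (Sg : Set W) : W :=
  letI := Classical.propDecidable (∃ w, IsLongest cs Sg w)
  if h : ∃ w, IsLongest cs Sg w then h.choose else 1

/-- `W̃ = {w : w W_Σ w⁻¹ = W_Σ and T(w) ∩ T_Σ = ∅}`. -/
def relW (cs : CoxeterSystem M W) (Sg : Set W) : Set W :=
  {w | (fun u => w * u * w⁻¹) '' (par Sg : Set W) = (par Sg : Set W) ∧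
    invSet cs w ∩ parRefl Sg = ∅}

/-- `Σ^∁ = {s ∈ S ∖ Σ : W_{Σ∪{s}} is finite}`. -/
def complSet (cs : CoxeterSystem M W) (Sg : Set W) : Set W :=
  {s ∈ simpleSet cs \ Sg | ((par (Sg ∪ {s}) : Set W)).Finite}

/-- `s̃ = w₀^{Σ∪{s}} w₀^Σ`. -/
noncomputable def tilde (cs : CoxeterSystem M W) (Sg : Set W) (s : W) : W :=
  longest cs (Sg ∪ {s}) * longest cs Sg

/-- `S̃ = {s̃ : s ∈ Σ^∁}`. -/
noncomputable def relS (cs : CoxeterSystem M W) (Sg : Set W) : Set W :=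
  {w | ∃ s ∈ complSet cs Sg, w = tilde cs Sg s}

/-- `ℓ̃(w) ∈ ℕ ∪ {∞}`: the minimal `q` such that `w = w₁ ⋯ w_q` with all `w_i ∈ S̃`. -/
noncomputable def relLength (cs : CoxeterSystem M W) (Sg : Set W) (w : W) : ℕ∞ :=
  sInf {q : ℕ∞ | ∃ l : List W, (∀ x ∈ l, x ∈ relS cs Sg) ∧ l.prod = w ∧
    (l.length : ℕ∞) = q}

/-- The standing hypotheses on `Σ`: `Σ ⊆ S`, `W_Σ` is finite, and for every `Σ'` with
`Σ ⊆ Σ' ⊆ S` and `W_{Σ'}` finite, the longest element `w₀^{Σ'}` normalises `W_Σ`. -/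
def GoodSubset (cs : CoxeterSystem M W) (Sg : Set W) : Prop :=
  Sg ⊆ simpleSet cs ∧ ((par Sg : Set W)).Finite ∧
  ∀ Sg' : Set W, Sg ⊆ Sg' → Sg' ⊆ simpleSet cs → ((par Sg' : Set W)).Finite →
    ∀ w0 : W, IsLongest cs Sg' w0 →
      (fun u => w0 * u * w0⁻¹) '' (par Sg : Set W) = (par Sg : Set W)

variable (cs : CoxeterSystem M W)

local prefix:100 "s" => cs.simple
local prefix:100 "π" => cs.wordProd
local prefix:100 "ℓ" => cs.length
local prefix:100 "ris" => cs.rightInvSeq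

open scoped Classical

lemma ris_cons (i : B) (ω : List B) :
    ris (i :: ω) = ((π ω)⁻¹ * s i * π ω) :: ris ω := rfl

/-- The generator of the sign representation. -/
noncomputable def sgnAux (i : B) : W × ℤˣ → W × ℤˣ :=
  fun x => (s i * x.1 * s i, if x.1 = s i then -x.2 else x.2)

lemma sgnAux_invol (i : B) (x : W × ℤˣ) : sgnAux cs i (sgnAux cs i x) = x := by
  obtain ⟨w, ε⟩ := x
  simp only [sgnAux]
  have hc : s i * (s i * w * s i) * s i = w := by
    simp [mul_assoc, cs.simple_mul_simple_self, cs.simple_mul_simple_cancel_left]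
  by_cases h : w = s i
  · subst h
    simp [cs.simple_mul_simple_self]
  · have h2 : s i * w * s i ≠ s i := by
      intro hcontra
      apply h
      have := congrArg (fun z => s i * z * s i) hcontra
      rw [hc] at this
      rw [this]
      simp [mul_assoc, cs.simple_mul_simple_self, cs.simple_mul_simple_cancel_left]
    simp [h, h2, hc]

/-- The generator of the sign representation, as a permutation. -/
noncomputable def sgnPerm (i : B) : Equiv.Perm (W × ℤˣ) :=
  ⟨sgnAux cs i, sgnAux cs i, fun x => sgnAux_invol cs i x, fun x => sgnAux_invol cs i x⟩

lemma sgnPerm_apply (i : B) (x : W × ℤˣ) :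
    sgnPerm cs i x = (s i * x.1 * s i, if x.1 = s i then -x.2 else x.2) := rfl

lemma prod_sgnPerm_apply (ω : List B) (x : W × ℤˣ) :
    (List.map (sgnPerm cs) ω).prod x =
      (π ω * x.1 * (π ω)⁻¹, (-1) ^ ((ris ω).count x.1) * x.2) := by
  induction ω generalizing x with
  | nil => simp
  | cons i ω ih =>
    rw [map_cons, prod_cons, Equiv.Perm.mul_apply, ih, sgnPerm_apply, ris_cons,
      cs.wordProd_cons]
    dsimp only
    have hiff : (π ω * x.1 * (π ω)⁻¹ = s i) ↔ x.1 = (π ω)⁻¹ * s i * π ω := by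
      constructor
      · intro h
        rw [← h]; group
      · intro h
        rw [h]; group
    refine Prod.ext ?_ ?_
    · dsimp only
      rw [mul_inv_rev, cs.inv_simple]
      group
    · dsimp only
      rw [List.count_cons]
      by_cases h : x.1 = (π ω)⁻¹ * s i * π ω
      · rw [if_pos (hiff.mpr h), if_pos (by exact beq_iff_eq.mpr h.symm), pow_add, pow_one]
        rw [mul_neg_one, neg_mul]
      · rw [if_neg (fun hc => h (hiff.mp hc)),
          if_neg (by simp only [beq_iff_eq]; exact fun hc => h hc.symm), add_zero]


lemma simple_mul_pow (i i' : B) (n : ℕ) :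
    s i' * (s i * s i') ^ n = ((s i * s i') ^ n)⁻¹ * s i' := by
  have hbq : s i' * (s i * s i') = (s i * s i')⁻¹ * s i' := by
    rw [mul_inv_rev, cs.inv_simple, cs.inv_simple, mul_assoc]
  induction n with
  | zero => simp
  | succ n ih =>
    rw [pow_succ', ← mul_assoc, hbq, mul_assoc, ih, ← mul_assoc, ← mul_inv_rev, ← pow_succ, ← pow_succ']

lemma wordProd_alt_inv_mul (i i' : B) (d : ℕ) :
    (π (alternatingWord i i' d))⁻¹ * π (alternatingWord i i' (d + 1)) =
      ((s i * s i') ^ d)⁻¹ * s i' := by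
  rw [cs.prod_alternatingWord_eq_mul_pow, cs.prod_alternatingWord_eq_mul_pow]
  rcases Nat.even_or_odd d with he | ho
  · have hp : d % 2 = 0 := Nat.even_iff.mp he
    have h1 : ¬ Even (d + 1) := by simp [Nat.even_add_one, he]
    have h2 : (d + 1) / 2 = d / 2 := by omega
    have h3 : d / 2 + d / 2 = d := by omega
    rw [if_pos he, if_neg h1, h2, one_mul, simple_mul_pow, ← mul_assoc,
      ← mul_inv_rev, ← pow_add, h3]
  · have hp : d % 2 = 1 := Nat.odd_iff.mp ho
    have ho' : ¬ Even d := Nat.not_even_iff.mpr hp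
    have h1 : Even (d + 1) := by simpa [Nat.even_add_one] using ho'
    have h2 : (d + 1) / 2 = d / 2 + 1 := by omega
    have h3 : d / 2 + 1 + d / 2 = d := by omega
    rw [if_neg ho', if_pos h1, h2, one_mul, mul_inv_rev, cs.inv_simple, mul_assoc,
      simple_mul_pow, ← mul_assoc, ← mul_inv_rev, ← pow_add, h3]

lemma drop_alternatingWord (i i' : B) (d n : ℕ) :
    (alternatingWord i i' n).drop d = alternatingWord i i' (n - d) := by
  induction d generalizing n with
  | zero => simp
  | succ d ih =>
    cases n with
    | zero => simp [alternatingWord]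
    | succ n => rw [alternatingWord_succ', drop_succ_cons, ih, Nat.succ_sub_succ]

lemma getD_ris_alternatingWord (i i' : B) (n k : ℕ) (hk : k < n) :
    (ris (alternatingWord i i' n)).getD k 1 =
      ((s i * s i') ^ (n - 1 - k))⁻¹ * s i' := by
  have h1 : n - k = (n - k - 1) + 1 := by omega
  have hget : (alternatingWord i i' n)[k]? = some (if Even (n - k - 1) then i' else i) := by
    have h := List.getElem?_drop (xs := alternatingWord i i' n) (i := k) (j := 0)
    rw [drop_alternatingWord, h1, alternatingWord_succ'] at h
    simp only [getElem?_cons_zero, Nat.add_zero] at h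
    rw [← h]
  have h5 : n - 1 - k = n - k - 1 := by omega
  rw [cs.getD_rightInvSeq, hget, drop_alternatingWord, h5]
  simp only [Option.map_some, Option.getD_some]
  have h4 : n - (k + 1) = n - k - 1 := by omega
  rw [h4, mul_assoc, ← cs.wordProd_cons, ← alternatingWord_succ', wordProd_alt_inv_mul]

lemma ris_alternatingWord_double (i i' : B) (m : ℕ) (h : (s i * s i') ^ m = 1) :
    ris (alternatingWord i i' (2 * m)) =
      ris (alternatingWord i i' m) ++ ris (alternatingWord i i' m) := by
  apply List.ext_getElem
  · simp [length_alternatingWord]; omega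
  · intro k h1 h2
    have hk : k < 2 * m := by simpa [length_alternatingWord] using h1
    have hm : (ris (alternatingWord i i' m)).length = m := by simp [length_alternatingWord]
    rw [← List.getD_eq_getElem _ 1 h1, ← List.getD_eq_getElem _ 1 h2]
    rw [getD_ris_alternatingWord cs i i' _ _ hk]
    by_cases hkm : k < m
    · rw [List.getD_append _ _ 1 k (by rw [hm]; omega)]
      rw [getD_ris_alternatingWord cs i i' _ _ hkm]
      have heq : 2 * m - 1 - k = (m - 1 - k) + m := by omega
      rw [heq, pow_add, h, mul_one]
    · rw [List.getD_append_right _ _ 1 k (by rw [hm]; omega)]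
      rw [hm, getD_ris_alternatingWord cs i i' _ _ (by omega)]
      have heq : m - 1 - (k - m) = 2 * m - 1 - k := by omega
      rw [heq]

lemma prod_sgnPerm_alternatingWord (i i' : B) (m : ℕ) :
    (sgnPerm cs i * sgnPerm cs i') ^ m =
      (List.map (sgnPerm cs) (alternatingWord i i' (2 * m))).prod := by
  induction m with
  | zero => simp [alternatingWord]
  | succ m ih =>
    have h2 : 2 * (m + 1) = (2 * m + 1) + 1 := by ring
    rw [h2, alternatingWord_succ', alternatingWord_succ']
    have he1 : ¬ Even (2 * m + 1) := by simp [Nat.even_add_one]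
    have he2 : Even (2 * m) := even_two_mul m
    rw [if_neg he1, if_pos he2, map_cons, map_cons, prod_cons, prod_cons, ← ih,
      pow_succ', mul_assoc]

lemma isLiftable_sgnPerm : M.IsLiftable (sgnPerm cs) := by
  intro i i'
  rw [prod_sgnPerm_alternatingWord]
  apply Equiv.ext
  intro x
  rw [prod_sgnPerm_apply]
  have hπ : π (alternatingWord i i' (2 * M i i')) = 1 := by
    rw [cs.prod_alternatingWord_eq_mul_pow, if_pos (even_two_mul _), one_mul,
      show 2 * M i i' / 2 = M i i' by omega, cs.simple_mul_simple_pow]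
  have hcount : (ris (alternatingWord i i' (2 * M i i'))).count x.1
      = (ris (alternatingWord i i' (M i i'))).count x.1
        + (ris (alternatingWord i i' (M i i'))).count x.1 := by
    rw [ris_alternatingWord_double cs i i' _ (cs.simple_mul_simple_pow i i'), List.count_append]
  rw [hπ, hcount, pow_add, Int.units_mul_self, one_mul]
  simp


/-- The sign representation of the Coxeter group on `W × ℤˣ`. -/
noncomputable def sgnRep : W →* Equiv.Perm (W × ℤˣ) :=
  cs.lift ⟨sgnPerm cs, isLiftable_sgnPerm cs⟩

/-- `eta cs w t = -1` iff `t` is a right inversion of `w` (for `t` a reflection). -/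
noncomputable def eta (w t : W) : ℤˣ := ((sgnRep cs w) (t, 1)).2

lemma sgnRep_wordProd (ω : List B) :
    sgnRep cs (π ω) = (List.map (sgnPerm cs) ω).prod := by
  induction ω with
  | nil => rw [cs.wordProd_nil, map_one, map_nil, prod_nil]
  | cons i ω ih =>
    rw [cs.wordProd_cons, map_mul, ih, map_cons, prod_cons, sgnRep,
      cs.lift_apply_simple]

lemma eta_wordProd (ω : List B) (t : W) :
    eta cs (π ω) t = (-1) ^ ((ris ω).count t) := by
  rw [eta, sgnRep_wordProd, prod_sgnPerm_apply]
  simp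

lemma sgnRep_apply (w t : W) (ε : ℤˣ) :
    sgnRep cs w (t, ε) = (w * t * w⁻¹, eta cs w t * ε) := by
  obtain ⟨ω, rfl⟩ := cs.wordProd_surjective w
  rw [sgnRep_wordProd, prod_sgnPerm_apply, eta_wordProd]

lemma eta_mul (u v t : W) :
    eta cs (u * v) t = eta cs v t * eta cs u (v * t * v⁻¹) := by
  rw [eta, map_mul, Equiv.Perm.mul_apply, sgnRep_apply cs v t 1, sgnRep_apply]
  simp [mul_comm]

lemma eta_one (t : W) : eta cs 1 t = 1 := by
  have h := eta_wordProd cs [] t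
  simpa using h

lemma units_eq_of_mul_eq_one {a b : ℤˣ} (h : a * b = 1) : a = b := by
  rcases Int.units_eq_one_or a with h1 | h1 <;> rcases Int.units_eq_one_or b with h2 | h2 <;>
    subst h1 <;> subst h2 <;> simp_all

lemma eta_inv (w t : W) : eta cs w⁻¹ t = eta cs w (w⁻¹ * t * w) := by
  have h := eta_mul cs w w⁻¹ t
  rw [mul_inv_cancel, eta_one, inv_inv] at h
  exact (units_eq_of_mul_eq_one h.symm)

lemma eta_simple (i : B) : eta cs (s i) (s i) = -1 := by
  have h := eta_wordProd cs [i] (s i)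
  rw [cs.wordProd_singleton] at h
  rw [h, rightInvSeq_singleton]
  simp

lemma eta_isReflection_self {t : W} (ht : cs.IsReflection t) : eta cs t t = -1 := by
  obtain ⟨w, i, rfl⟩ := ht
  have h1 : eta cs (w * s i * w⁻¹) (w * s i * w⁻¹)
      = eta cs (s i * w⁻¹) (w * s i * w⁻¹) * eta cs w (s i) := by
    have h := eta_mul cs w (s i * w⁻¹) (w * s i * w⁻¹)
    rw [show (s i * w⁻¹) * (w * s i * w⁻¹) * (s i * w⁻¹)⁻¹ = s i by group,
      ← mul_assoc] at h
    exact h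
  have h2 : eta cs (s i * w⁻¹) (w * s i * w⁻¹)
      = eta cs w⁻¹ (w * s i * w⁻¹) * (-1) := by
    have h := eta_mul cs (s i) w⁻¹ (w * s i * w⁻¹)
    rw [show w⁻¹ * (w * s i * w⁻¹) * w⁻¹⁻¹ = s i by group, eta_simple] at h
    exact h
  have h3 : eta cs w⁻¹ (w * s i * w⁻¹) = eta cs w (s i) := by
    rw [eta_inv]
    congr 1
    group
  rw [h1, h2, h3, mul_neg_one, neg_mul, Int.units_mul_self]

lemma length_lt_of_eta_eq_neg_one {w t : W} (heta : eta cs w t = -1) :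
    ℓ (w * t) < ℓ w := by
  obtain ⟨ω, hlen, rfl⟩ := cs.exists_reduced_word w
  have hred : cs.IsReduced ω := hlen
  rw [eta_wordProd] at heta
  have hodd : Odd ((ris ω).count t) := by
    by_contra hodd
    rw [Nat.not_odd_iff_even] at hodd
    rw [hodd.neg_one_pow] at heta
    exact absurd heta (by decide)
  have hmem : t ∈ ris ω := by
    have : (ris ω).count t ≠ 0 := by
      rcases hodd with ⟨k, hk⟩
      omega
    exact List.count_pos_iff.mp (Nat.pos_of_ne_zero this)
  exact (cs.isRightInversion_of_mem_rightInvSeq hred hmem).2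


lemma isRightInversion_iff_eta {w t : W} (ht : cs.IsReflection t) :
    ℓ (w * t) < ℓ w ↔ eta cs w t = -1 := by
  constructor
  · intro hlt
    by_contra hne
    have h1 : eta cs w t = 1 := (Int.units_eq_one_or _).resolve_right hne
    have h2 : eta cs (w * t) t = -1 := by
      rw [eta_mul, show t * t * t⁻¹ = t by group, eta_isReflection_self cs ht, h1,
        mul_one]
    have h3 := length_lt_of_eta_eq_neg_one cs h2
    rw [mul_assoc, ht.mul_self, mul_one] at h3
    exact absurd h3 (Nat.lt_asymm hlt)
  · exact length_lt_of_eta_eq_neg_one cs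


lemma wordProd_mem_par {Sg : Set W} {ω : List B} (hω : ∀ i ∈ ω, cs.simple i ∈ Sg) :
    π ω ∈ par Sg := by
  induction ω with
  | nil => rw [cs.wordProd_nil]; exact one_mem _
  | cons i ω ih =>
    rw [cs.wordProd_cons]
    exact mul_mem (Subgroup.subset_closure (hω i (List.mem_cons_self)))
      (ih fun j hj => hω j (List.mem_cons_of_mem i hj))

lemma exists_word_of_mem_par {Sg : Set W} (hs : Sg ⊆ simpleSet cs) {w : W}
    (hw : w ∈ par Sg) : ∃ ω : List B, (∀ i ∈ ω, cs.simple i ∈ Sg) ∧ π ω = w := by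
  induction hw using Subgroup.closure_induction with
  | mem x hx =>
    obtain ⟨i, hi⟩ := hs hx
    refine ⟨[i], ?_, by simpa using hi⟩
    intro j hj
    simp only [List.mem_singleton] at hj
    subst hj
    rw [hi]
    exact hx
  | one => exact ⟨[], by simp, cs.wordProd_nil⟩
  | mul x y hx hy ihx ihy =>
    obtain ⟨α, hα, hαp⟩ := ihx
    obtain ⟨β, hβ, hβp⟩ := ihy
    refine ⟨α ++ β, ?_, by rw [cs.wordProd_append, hαp, hβp]⟩
    intro i hi
    rcases List.mem_append.mp hi with h | h
    exacts [hα i h, hβ i h]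
  | inv x hx ihx =>
    obtain ⟨α, hα, hαp⟩ := ihx
    exact ⟨α.reverse, fun i hi => hα i (List.mem_reverse.mp hi),
      by rw [cs.wordProd_reverse, hαp]⟩

lemma mem_parRefl_of_isReflection {Sg : Set W} (hs : Sg ⊆ simpleSet cs) {t : W}
    (ht : cs.IsReflection t) (htp : t ∈ par Sg) : t ∈ parRefl Sg := by
  obtain ⟨ω, hω, hprod⟩ := exists_word_of_mem_par cs hs htp
  have hlen : ℓ (π ω * t) < ℓ (π ω) := by
    rw [hprod, ht.mul_self, cs.length_one]
    have hodd := ht.odd_length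
    rcases hodd with ⟨k, hk⟩
    omega
  have heta := (isRightInversion_iff_eta cs ht).mp hlen
  rw [eta_wordProd] at heta
  have hmem : t ∈ ris ω := by
    by_contra hmem
    rw [List.count_eq_zero_of_not_mem hmem, pow_zero] at heta
    exact absurd heta (by decide)
  obtain ⟨k, hk, hkt⟩ := List.mem_iff_getElem.mp hmem
  have hk' : k < ω.length := by simpa using hk
  rw [← List.getD_eq_getElem _ 1 hk, cs.getD_rightInvSeq,
    List.getElem?_eq_getElem hk'] at hkt
  simp only [Option.map_some, Option.getD_some] at hkt
  refine ⟨(π (ω.drop (k + 1)))⁻¹,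
    inv_mem (wordProd_mem_par cs fun i hi => hω i (List.mem_of_mem_drop hi)),
    cs.simple ω[k], hω _ (List.getElem_mem hk'), ?_⟩
  rw [inv_inv, hkt]

lemma isReflection_of_mem_parRefl {Sg : Set W} (hs : Sg ⊆ simpleSet cs) {t : W}
    (ht : t ∈ parRefl Sg) : cs.IsReflection t := by
  obtain ⟨u, hu, σ, hσ, rfl⟩ := ht
  obtain ⟨i, hi⟩ := hs hσ
  rw [← hi]
  exact (cs.isReflection_simple i).conj u

lemma parRefl_subset_par {Sg : Set W} : parRefl Sg ⊆ (par Sg : Set W) := by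
  rintro t ⟨u, hu, σ, hσ, rfl⟩
  exact mul_mem (mul_mem hu (Subgroup.subset_closure hσ)) (inv_mem hu)

lemma mem_invSet_iff {w t : W} (ht : cs.IsReflection t) :
    t ∈ invSet cs w ↔ eta cs w⁻¹ t = -1 := by
  rw [← isRightInversion_iff_eta cs ht]
  have hlen : ℓ (w⁻¹ * t) = ℓ (t * w) := by
    rw [← cs.length_inv (t * w), mul_inv_rev, ht.inv]
  constructor
  · rintro ⟨-, h2⟩
    rw [hlen, cs.length_inv]
    exact h2
  · intro h
    rw [hlen, cs.length_inv] at h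
    exact ⟨ht, h⟩

/-- multiplication restricts to `N(Σ', Σ'') × N(Σ, Σ') → N(Σ, Σ'')`. -/
theorem relN_mul (Sg Sg' Sg'' : Set W) (hSg : Sg ⊆ simpleSet cs)
    (hSg' : Sg' ⊆ simpleSet cs) (hSg'' : Sg'' ⊆ simpleSet cs)
    (y y' : W) (hy : y ∈ relN cs Sg Sg') (hy' : y' ∈ relN cs Sg' Sg'') :
    y' * y ∈ relN cs Sg Sg'' := by
  obtain ⟨hyR, hyL, hyC⟩ := hy
  obtain ⟨hy'R, hy'L, hy'C⟩ := hy'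
  have hyR' : invSet cs y⁻¹ ∩ parRefl Sg = ∅ := hyR
  have hyL' : invSet cs y ∩ parRefl Sg' = ∅ := hyL
  have hy'R' : invSet cs y'⁻¹ ∩ parRefl Sg' = ∅ := hy'R
  have hy'L' : invSet cs y' ∩ parRefl Sg'' = ∅ := hy'L
  refine ⟨?_, ?_, ?_⟩
  · -- `y' * y ∈ minRight cs Sg`
    show invSet cs (y' * y)⁻¹ ∩ parRefl Sg = ∅
    rw [Set.eq_empty_iff_forall_notMem]
    rintro t ⟨htA, htB⟩
    have htr : cs.IsReflection t := isReflection_of_mem_parRefl cs hSg htB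
    have heta : eta cs (y' * y) t = -1 := by
      have h := (mem_invSet_iff cs htr).mp htA
      rwa [inv_inv] at h
    rw [eta_mul] at heta
    have h1 : eta cs y t = 1 := by
      rcases Int.units_eq_one_or (eta cs y t) with h | h
      · exact h
      · exfalso
        have hti : t ∈ invSet cs y⁻¹ := (mem_invSet_iff cs htr).mpr (by rwa [inv_inv])
        exact Set.eq_empty_iff_forall_notMem.mp hyR' t ⟨hti, htB⟩
    rw [h1, one_mul] at heta
    have ht3r : cs.IsReflection (y * t * y⁻¹) := htr.conj y
    have ht3p : y * t * y⁻¹ ∈ (par Sg' : Set W) := by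
      rw [← hyC]
      exact ⟨t, parRefl_subset_par htB, rfl⟩
    have ht3 : y * t * y⁻¹ ∈ parRefl Sg' :=
      mem_parRefl_of_isReflection cs hSg' ht3r ht3p
    have ht3i : y * t * y⁻¹ ∈ invSet cs y'⁻¹ :=
      (mem_invSet_iff cs ht3r).mpr (by rwa [inv_inv])
    exact Set.eq_empty_iff_forall_notMem.mp hy'R' _ ⟨ht3i, ht3⟩
  · -- `y' * y ∈ minLeft cs Sg''`
    show invSet cs (y' * y) ∩ parRefl Sg'' = ∅
    rw [Set.eq_empty_iff_forall_notMem]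
    rintro t ⟨htA, htB⟩
    have htr : cs.IsReflection t := isReflection_of_mem_parRefl cs hSg'' htB
    have heta : eta cs (y' * y)⁻¹ t = -1 := (mem_invSet_iff cs htr).mp htA
    rw [mul_inv_rev, eta_mul, inv_inv] at heta
    have h1 : eta cs y'⁻¹ t = 1 := by
      rcases Int.units_eq_one_or (eta cs y'⁻¹ t) with h | h
      · exact h
      · exfalso
        have hti : t ∈ invSet cs y' := (mem_invSet_iff cs htr).mpr h
        exact Set.eq_empty_iff_forall_notMem.mp hy'L' t ⟨hti, htB⟩
    rw [h1, one_mul] at heta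
    have ht2r : cs.IsReflection (y'⁻¹ * t * y') := by
      have h := htr.conj y'⁻¹
      rwa [inv_inv] at h
    have ht2p : y'⁻¹ * t * y' ∈ (par Sg' : Set W) := by
      have htp : t ∈ (par Sg'' : Set W) := parRefl_subset_par htB
      rw [← hy'C] at htp
      obtain ⟨v, hv, hveq⟩ := htp
      have hveq2 : y'⁻¹ * t * y' = v := by rw [← hveq]; group
      rw [hveq2]
      exact hv
    have ht2m : y'⁻¹ * t * y' ∈ parRefl Sg' :=
      mem_parRefl_of_isReflection cs hSg' ht2r ht2p
    have ht2i : y'⁻¹ * t * y' ∈ invSet cs y := (mem_invSet_iff cs ht2r).mpr heta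
    exact Set.eq_empty_iff_forall_notMem.mp hyL' _ ⟨ht2i, ht2m⟩
  · -- conjugation
    show (fun u => (y' * y) * u * (y' * y)⁻¹) '' (par Sg : Set W) = (par Sg'' : Set W)
    rw [← hy'C, ← hyC, ← Set.image_comp]
    apply congrArg (· '' (par Sg : Set W))
    funext u
    simp only [Function.comp_apply]
    group


end RelativeCoxeter
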